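/- Consider the TRS R = {a(b(x)) → x, c(c(d)) → c(c(d))} over the signature with unary symbols a, b, c and constant d, and let N be the set of strongly normalizing ground terms of R. Then: (i) for every n ∈ ℕ the term c(aⁿ(bⁿ(c(d)))) is non-terminating; (ii) for all n, m ∈ ℕ with n ≠ m the term c(aⁿ(bᵐ(c(d)))) is terminating; and consequently (iii) the terms bⁿ(c(d)) for n ∈ ℕ are pairwise non-equivalent under the Nerode congruence ~_N, so ~_N has infinitely many equivalence classes. -/
import Mathlib


namespace ABCD

/-- Ground terms over the signature with unary `a`, `b`, `c` and constant `d`. -/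
inductive T4 : Type
  | d : T4
  | a : T4 → T4
  | b : T4 → T4
  | c : T4 → T4

open T4

/-- One-step rewriting with the rules `a(b(x)) → x` and
`c(c(d)) → c(c(d))`, closed under contexts. -/
inductive R4 : T4 → T4 → Prop
  | ab (x : T4) : R4 (a (b x)) x
  | ccd : R4 (c (c d)) (c (c d))
  | a_c {u v : T4} : R4 u v → R4 (a u) (a v)
  | b_c {u v : T4} : R4 u v → R4 (b u) (b v)
  | c_c {u v : T4} : R4 u v → R4 (c u) (c v)

/-- Strong normalisation (termination) of a ground term. -/
def SN4 (t : T4) : Prop :=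
  ¬ ∃ f : ℕ → T4, f 0 = t ∧ ∀ n : ℕ, R4 (f n) (f (n + 1))

/-- Ground one-hole contexts (all symbols are unary): strings of unary
symbols around the hole. -/
inductive Ctx4 : Type
  | hole : Ctx4
  | a : Ctx4 → Ctx4
  | b : Ctx4 → Ctx4
  | c : Ctx4 → Ctx4

/-- Plugging a term into a context. -/
def plug4 : Ctx4 → T4 → T4
  | .hole, t => t
  | .a C, t => a (plug4 C t)
  | .b C, t => b (plug4 C t)
  | .c C, t => c (plug4 C t)

/-- The Nerode congruence with respect to the set `N` of strongly
normalizing ground terms. -/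
def Ner4 (t1 t2 : T4) : Prop :=
  ∀ C : Ctx4, (SN4 (plug4 C t1) ↔ SN4 (plug4 C t2))

lemma ctxA {u v : T4} (h : R4 u v) : ∀ i, R4 (a^[i] u) (a^[i] v)
  | 0 => h
  | i+1 => by
    rw [Function.iterate_succ_apply', Function.iterate_succ_apply']
    exact R4.a_c (ctxA h i)

lemma step_ab (i : ℕ) (x : T4) : R4 (a^[i+1] (b^[i+1] x)) (a^[i] (b^[i] x)) := by
  rw [Function.iterate_succ_apply a, Function.iterate_succ_apply' b]
  exact ctxA (R4.ab _) i

lemma not_sn (n : ℕ) : ¬ SN4 (c (a^[n] (b^[n] (c d)))) := by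
  intro h
  apply h
  refine ⟨fun k => c (a^[n-k] (b^[n-k] (c d))), by simp, ?_⟩
  intro k
  show R4 (c (a^[n-k] (b^[n-k] (c d)))) (c (a^[n-(k+1)] (b^[n-(k+1)] (c d))))
  rcases lt_or_ge k n with hk | hk
  · have h1 : n - k = (n - (k+1)) + 1 := by omega
    rw [h1]
    exact R4.c_c (step_ab _ _)
  · have h1 : n - k = 0 := by omega
    have h2 : n - (k+1) = 0 := by omega
    rw [h1, h2]
    simpa using R4.ccd

lemma inv_a {t v : T4} (h : R4 (a t) v) :
    (∃ x, t = b x ∧ v = x) ∨ ∃ w, R4 t w ∧ v = a w := by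
  cases h with
  | ab => exact Or.inl ⟨_, rfl, rfl⟩
  | a_c h' => exact Or.inr ⟨_, h', rfl⟩

lemma inv_c {t v : T4} (h : R4 (c t) v) :
    (t = c d ∧ v = c (c d)) ∨ ∃ w, R4 t w ∧ v = c w := by
  cases h with
  | ccd => exact Or.inl ⟨rfl, rfl⟩
  | c_c h' => exact Or.inr ⟨_, h', rfl⟩

lemma no_step_b (m : ℕ) : ∀ v, ¬ R4 (b^[m] (c d)) v := by
  induction m with
  | zero =>
    intro v h
    cases h with
    | c_c h' => cases h'
  | succ m ih =>
    intro v h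
    rw [Function.iterate_succ_apply'] at h
    cases h with
    | b_c h' => exact ih _ h'

lemma step_char : ∀ n m v, R4 (a^[n] (b^[m] (c d))) v →
    ∃ n' m', n = n' + 1 ∧ m = m' + 1 ∧ v = a^[n'] (b^[m'] (c d)) := by
  intro n
  induction n with
  | zero => intro m v h; exact absurd h (no_step_b m v)
  | succ n ih =>
    intro m v h
    rw [Function.iterate_succ_apply'] at h
    rcases inv_a h with ⟨x, hx, rfl⟩ | ⟨w, hw, rfl⟩
    · cases n with
      | zero =>
        simp only [Function.iterate_zero_apply] at hx
        cases m with
        | zero => simp only [Function.iterate_zero_apply] at hx; exact absurd hx (by simp)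
        | succ m =>
          rw [Function.iterate_succ_apply'] at hx
          injection hx with hx
          exact ⟨0, m, rfl, rfl, hx.symm⟩
      | succ n =>
        rw [Function.iterate_succ_apply'] at hx
        exact absurd hx (by simp)
    · obtain ⟨n', m', rfl, rfl, rfl⟩ := ih m w hw
      exact ⟨n' + 1, m', rfl, rfl, (Function.iterate_succ_apply' a n' _).symm⟩

lemma eq_cd {n m : ℕ} (h : a^[n] (b^[m] (c d)) = c d) : n = 0 ∧ m = 0 := by
  cases n with
  | succ n => rw [Function.iterate_succ_apply'] at h; exact absurd h (by simp)
  | zero =>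
    cases m with
    | succ m =>
      simp only [Function.iterate_zero_apply] at h
      rw [Function.iterate_succ_apply'] at h
      exact absurd h (by simp)
    | zero => exact ⟨rfl, rfl⟩

lemma sn_ne : ∀ k n m : ℕ, min n m ≤ k → n ≠ m → SN4 (c (a^[n] (b^[m] (c d)))) := by
  intro k
  induction k with
  | zero =>
    rintro n m hk hne ⟨f, hf0, hstep⟩
    have h1 := hstep 0
    rw [hf0] at h1
    rcases inv_c h1 with ⟨heq, _⟩ | ⟨w, hw, _⟩
    · obtain ⟨rfl, rfl⟩ := eq_cd heq; exact hne rfl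
    · obtain ⟨n', m', rfl, rfl, _⟩ := step_char _ _ _ hw
      omega
  | succ k ih =>
    rintro n m hk hne ⟨f, hf0, hstep⟩
    have h1 := hstep 0
    rw [hf0] at h1
    rcases inv_c h1 with ⟨heq, _⟩ | ⟨w, hw, hv⟩
    · obtain ⟨rfl, rfl⟩ := eq_cd heq; exact hne rfl
    · obtain ⟨n', m', rfl, rfl, rfl⟩ := step_char _ _ _ hw
      exact ih n' m' (by omega) (by omega)
        ⟨fun i => f (i+1), hv, fun i => hstep (i+1)⟩

lemma plug_an (n : ℕ) (C : Ctx4) (t : T4) :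
    plug4 (Ctx4.a^[n] C) t = a^[n] (plug4 C t) := by
  induction n with
  | zero => rfl
  | succ n ih =>
    rw [Function.iterate_succ_apply', Function.iterate_succ_apply']
    simpa [plug4] using congrArg T4.a ih

theorem nerode_infinitely_many_classes :
    (∀ n : ℕ, ¬ SN4 (c (a^[n] (b^[n] (c d))))) ∧
    (∀ n m : ℕ, n ≠ m → SN4 (c (a^[n] (b^[m] (c d))))) ∧
    (∀ n m : ℕ, n ≠ m → ¬ Ner4 (b^[n] (c d)) (b^[m] (c d))) := by
  refine ⟨not_sn, fun n m hne => sn_ne (min n m) n m le_rfl hne, ?_⟩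
  intro n m hne hN
  have h := hN (Ctx4.c (Ctx4.a^[n] Ctx4.hole))
  simp only [plug4, plug_an] at h
  exact not_sn n (h.mpr (sn_ne (min n m) n m le_rfl hne))

end ABCD
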